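/- A sequence d₁ ≥ d₂ ≥ ... ≥ dₙ > 0 of positive integers is graphic (realizable as the degree sequence of a simple graph) if and only if the sum Σdᵢ is even and for each k with 1 ≤ k ≤ n, Σ_{i=1}^k dᵢ ≤ k(k-1) + Σ_{i=k+1}^n min(k, dᵢ). -/

import Mathlib

open Finset

lemma sum_filter_lt_eq {n : ℕ} (k : ℕ) (hk : k ≤ n) (g : Fin n → ℕ) (G : ℕ → ℕ)
    (hg : ∀ i : Fin n, g i = G i.val) :
    ∑ i ∈ Finset.univ.filter (fun i : Fin n => i.val < k), g i = ∑ j ∈ Finset.range k, G j := by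
  apply Finset.sum_bij (i := fun (i : Fin n) _ => i.val)
  · intro a ha; simp at ha ⊢; omega
  · intro a ha b hb h; exact Fin.val_injective h
  · intro j hj
    simp at hj
    exact ⟨⟨j, lt_of_lt_of_le hj hk⟩, by simpa using hj, rfl⟩
  · intro a ha; exact hg a

lemma sum_filter_ge_eq {n : ℕ} (k : ℕ) (g : Fin n → ℕ) (G : ℕ → ℕ)
    (hg : ∀ i : Fin n, g i = G i.val) :
    ∑ i ∈ Finset.univ.filter (fun i : Fin n => k ≤ i.val), g i = ∑ j ∈ Finset.Ico k n, G j := by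
  apply Finset.sum_bij (i := fun (i : Fin n) _ => i.val)
  · intro a ha; simp at ha ⊢; omega
  · intro a ha b hb h; exact Fin.val_injective h
  · intro j hj
    simp at hj
    exact ⟨⟨j, hj.2⟩, by simpa using hj.1, rfl⟩
  · intro a ha; exact hg a

lemma card_filter_val_lt {n : ℕ} (m : ℕ) (hm : m ≤ n) :
    (Finset.univ.filter (fun i : Fin n => i.val < m)).card = m := by
  have := sum_filter_lt_eq (n := n) m hm (fun _ => 1) (fun _ => 1) (fun _ => rfl)
  simpa using this

lemma eg_necessity {n : ℕ} (G : SimpleGraph (Fin n)) [DecidableRel G.Adj] (k : ℕ) (hk : k ≤ n) :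
    ∑ i ∈ Finset.univ.filter (fun i : Fin n => i.val < k), G.degree i ≤
      k * (k - 1) + ∑ i ∈ Finset.univ.filter (fun i : Fin n => k ≤ i.val), min k (G.degree i) := by
  classical
  set S := Finset.univ.filter (fun i : Fin n => i.val < k) with hS
  set T := Finset.univ.filter (fun i : Fin n => k ≤ i.val) with hT
  have hcardS : S.card = k := card_filter_val_lt k hk
  have hdeg : ∀ i : Fin n, G.degree i = (S.filter (G.Adj i)).card + (T.filter (G.Adj i)).card := by
    intro i
    rw [SimpleGraph.degree, SimpleGraph.neighborFinset_eq_filter]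
    have hsplit : Finset.univ.filter (fun w => G.Adj i w) = S.filter (G.Adj i) ∪ T.filter (G.Adj i) := by
      ext w
      by_cases h : G.Adj i w <;> simp [hS, hT, h] <;> omega
    rw [hsplit, Finset.card_union_of_disjoint]
    refine Finset.disjoint_left.2 ?_
    intro w hw1 hw2
    simp [hS, hT] at hw1 hw2
    omega
  calc ∑ i ∈ S, G.degree i
      = ∑ i ∈ S, (S.filter (G.Adj i)).card + ∑ i ∈ S, (T.filter (G.Adj i)).card := by
        rw [← Finset.sum_add_distrib]; exact Finset.sum_congr rfl (fun i _ => hdeg i)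
    _ ≤ k * (k-1) + ∑ j ∈ T, min k (G.degree j) := by
        gcongr ?_ + ?_
        · -- inner edges
          calc ∑ i ∈ S, (S.filter (G.Adj i)).card
              ≤ ∑ _i ∈ S, (k-1) := by
                refine Finset.sum_le_sum (fun i hi => ?_)
                have hsub : S.filter (G.Adj i) ⊆ S.erase i := by
                  intro w hw
                  simp at hw
                  refine Finset.mem_erase.2 ⟨?_, hw.1⟩
                  rintro rfl
                  exact G.loopless.irrefl _ hw.2
                calc (S.filter (G.Adj i)).card ≤ (S.erase i).card := Finset.card_le_card hsub
                  _ = k - 1 := by rw [Finset.card_erase_of_mem hi, hcardS]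
            _ = k * (k-1) := by rw [Finset.sum_const, hcardS, smul_eq_mul]
        · -- crossing edges
          have hswap : ∑ i ∈ S, (T.filter (G.Adj i)).card = ∑ j ∈ T, (S.filter (G.Adj j)).card := by
            simp only [Finset.card_filter]
            rw [Finset.sum_comm]
            refine Finset.sum_congr rfl (fun j _ => Finset.sum_congr rfl (fun i _ => ?_))
            simp [SimpleGraph.adj_comm]
          rw [hswap]
          refine Finset.sum_le_sum (fun j hj => ?_)
          refine le_min ?_ ?_
          · calc (S.filter (G.Adj j)).card ≤ S.card := Finset.card_le_card (Finset.filter_subset _ _)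
              _ = k := hcardS
          · rw [SimpleGraph.degree, SimpleGraph.neighborFinset_eq_filter]
            exact Finset.card_le_card (by intro w hw; simp at hw ⊢; exact hw.2)

section surgery
variable {V : Type*} [Fintype V] [DecidableEq V]

lemma card_filter_or_aux (P : V → Prop) [DecidablePred P] (x : V) (hx : ¬ P x) :
    (Finset.univ.filter (fun w => P w ∨ w = x)).card = (Finset.univ.filter P).card + 1 := by
  have h : Finset.univ.filter (fun w => P w ∨ w = x) = insert x (Finset.univ.filter P) := by
    ext w; simp; tauto
  rw [h, Finset.card_insert_of_notMem (by simp [hx])]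

lemma card_filter_or_ne_aux (P : V → Prop) [DecidablePred P] (x b : V)
    (hx : ¬ P x) (hb : P b) (hxb : x ≠ b) :
    (Finset.univ.filter (fun w => (P w ∨ w = x) ∧ w ≠ b)).card = (Finset.univ.filter P).card := by
  have h : Finset.univ.filter (fun w => (P w ∨ w = x) ∧ w ≠ b)
      = (insert x (Finset.univ.filter P)).erase b := by
    ext w; simp; tauto
  rw [h, Finset.card_erase_of_mem (by simp [hb, hxb.symm]),
    Finset.card_insert_of_notMem (by simp [hx])]
  rfl

/-- Adding an edge between nonadjacent vertices. -/
lemma add_one_edge (G : SimpleGraph V) [DecidableRel G.Adj] (a b : V) (hab : a ≠ b)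
    (hnadj : ¬ G.Adj a b) :
    ∃ K : SimpleGraph V, ∃ _ : DecidableRel K.Adj,
      K.degree a = G.degree a + 1 ∧ K.degree b = G.degree b + 1 ∧
      ∀ v, v ≠ a → v ≠ b → K.degree v = G.degree v := by
  classical
  have hnadj' : ¬ G.Adj b a := fun h => hnadj h.symm
  let R : V → V → Prop := fun u w => G.Adj u w ∨ (u = a ∧ w = b) ∨ (u = b ∧ w = a)
  have hs : Symmetric R := by
    intro u w h
    rcases h with h | h | h
    · exact Or.inl h.symm
    · exact Or.inr (Or.inr ⟨h.2, h.1⟩)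
    · exact Or.inr (Or.inl ⟨h.2, h.1⟩)
  have hi : Irreflexive R := by
    intro u h
    rcases h with h | h | h
    · exact G.loopless.irrefl u h
    · exact hab (h.1.symm.trans h.2)
    · exact hab (h.2.symm.trans h.1)
  refine ⟨⟨R, ⟨fun _ _ h => hs h⟩, ⟨hi⟩⟩, (fun u w => by dsimp [R]; infer_instance), ?_, ?_, ?_⟩
  · rw [SimpleGraph.degree, SimpleGraph.neighborFinset_eq_filter]
    have h1 : Finset.univ.filter (fun w => R a w) = Finset.univ.filter (fun w => G.Adj a w ∨ w = b) := by
      ext w; simp [R, hab.symm]; tauto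
    rw [h1, card_filter_or_aux _ _ hnadj, SimpleGraph.degree, SimpleGraph.neighborFinset_eq_filter]
  · rw [SimpleGraph.degree, SimpleGraph.neighborFinset_eq_filter]
    have h1 : Finset.univ.filter (fun w => R b w) = Finset.univ.filter (fun w => G.Adj b w ∨ w = a) := by
      ext w; simp [R, hab]; tauto
    rw [h1, card_filter_or_aux _ _ hnadj', SimpleGraph.degree, SimpleGraph.neighborFinset_eq_filter]
  · intro v hva hvb
    rw [SimpleGraph.degree, SimpleGraph.neighborFinset_eq_filter]
    have h1 : Finset.univ.filter (fun w => R v w) = Finset.univ.filter (fun w => G.Adj v w) := by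
      ext w; simp [R, hva, hvb]
    rw [h1, SimpleGraph.degree, SimpleGraph.neighborFinset_eq_filter]

/-- adjacency relation of the 2-switch graph -/
def switchRel (G : SimpleGraph V) (a b x z : V) : V → V → Prop := fun u w =>
  (G.Adj u w ∨ ((u = a ∧ w = x) ∨ (u = x ∧ w = a)) ∨ ((u = b ∧ w = z) ∨ (u = z ∧ w = b))) ∧
  ¬ ((u = a ∧ w = b) ∨ (u = b ∧ w = a)) ∧ ¬ ((u = x ∧ w = z) ∨ (u = z ∧ w = x))

instance (G : SimpleGraph V) [DecidableRel G.Adj] (a b x z : V) :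
    DecidableRel (switchRel G a b x z) := fun u w => by
  unfold switchRel; infer_instance

/-- 2-switch: make `a` and `b` nonadjacent, preserving all degrees. -/
lemma make_nonadjacent (G : SimpleGraph V) [DecidableRel G.Adj] (a b x : V)
    (hadj : G.Adj a b) (hnax : ¬ G.Adj a x) (hxa : x ≠ a) (hxb : x ≠ b)
    (hdeg : G.degree b ≤ G.degree x) :
    ∃ H : SimpleGraph V, ∃ _ : DecidableRel H.Adj,
      (∀ v, H.degree v = G.degree v) ∧ ¬ H.Adj a b := by
  classical
  have hab : a ≠ b := G.ne_of_adj hadj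
  have hnxa : ¬ G.Adj x a := fun h => hnax h.symm
  -- find z
  have hYX : ((G.neighborFinset b).erase x).card ≤ ((G.neighborFinset x).erase b).card := by
    by_cases hbx : G.Adj x b
    · have h1 : ((G.neighborFinset x).erase b).card = G.degree x - 1 := by
        rw [Finset.card_erase_of_mem (by simpa using hbx)]; rfl
      have h2 : ((G.neighborFinset b).erase x).card = G.degree b - 1 := by
        rw [Finset.card_erase_of_mem (by simpa using hbx.symm)]; rfl
      omega
    · have h1 : (G.neighborFinset x).erase b = G.neighborFinset x :=
        Finset.erase_eq_of_notMem (by simpa using hbx)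
      calc ((G.neighborFinset b).erase x).card ≤ G.degree b := Finset.card_erase_le
        _ ≤ G.degree x := hdeg
        _ = ((G.neighborFinset x).erase b).card := by rw [h1]; rfl
  have haY : a ∈ (G.neighborFinset b).erase x :=
    Finset.mem_erase.2 ⟨Ne.symm hxa, by simpa using hadj.symm⟩
  have haX : a ∉ (G.neighborFinset x).erase b := by
    intro h
    exact hnxa (by simpa using (Finset.mem_of_mem_erase h))
  obtain ⟨z, hzX, hzY⟩ : ∃ z ∈ (G.neighborFinset x).erase b, z ∉ (G.neighborFinset b).erase x := by
    by_contra hcon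
    push_neg at hcon
    have : (G.neighborFinset x).erase b = (G.neighborFinset b).erase x :=
      Finset.eq_of_subset_of_card_le hcon hYX
    exact haX (this ▸ haY)
  have hxz : G.Adj x z := by
    have := Finset.mem_of_mem_erase hzX; simpa using this
  have hzb : z ≠ b := (Finset.mem_erase.1 hzX).1
  have hzx : z ≠ x := fun h => G.loopless.irrefl x (h ▸ hxz)
  have hnbz : ¬ G.Adj b z := by
    intro h
    exact hzY (Finset.mem_erase.2 ⟨hzx, by simpa using h⟩)
  have hza : z ≠ a := by
    rintro rfl
    exact hnax hxz.symm
  have hnzb : ¬ G.Adj z b := fun h => hnbz h.symm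
  have hax : a ≠ x := hxa.symm
  have haz : a ≠ z := hza.symm
  have hbz : b ≠ z := hzb.symm
  have hbx' : b ≠ x := hxb.symm
  have hxz' : x ≠ z := hzx.symm
  have hs : Symmetric (switchRel G a b x z) := by
    intro u w h
    unfold switchRel at h ⊢
    refine ⟨?_, ?_, ?_⟩
    · rcases h.1 with h1 | (⟨h1, h2⟩ | ⟨h1, h2⟩) | (⟨h1, h2⟩ | ⟨h1, h2⟩)
      · exact Or.inl h1.symm
      · exact Or.inr (Or.inl (Or.inr ⟨h2, h1⟩))
      · exact Or.inr (Or.inl (Or.inl ⟨h2, h1⟩))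
      · exact Or.inr (Or.inr (Or.inr ⟨h2, h1⟩))
      · exact Or.inr (Or.inr (Or.inl ⟨h2, h1⟩))
    · rintro (⟨h1, h2⟩ | ⟨h1, h2⟩)
      · exact h.2.1 (Or.inr ⟨h2, h1⟩)
      · exact h.2.1 (Or.inl ⟨h2, h1⟩)
    · rintro (⟨h1, h2⟩ | ⟨h1, h2⟩)
      · exact h.2.2 (Or.inr ⟨h2, h1⟩)
      · exact h.2.2 (Or.inl ⟨h2, h1⟩)
  have hi : Irreflexive (switchRel G a b x z) := by
    intro u h
    unfold switchRel at h
    rcases h.1 with h1 | h1 | h1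
    · exact G.loopless.irrefl u h1
    · rcases h1 with ⟨rfl, h'⟩ | ⟨rfl, h'⟩
      · exact hax h'
      · exact hxa h'
    · rcases h1 with ⟨rfl, h'⟩ | ⟨rfl, h'⟩
      · exact hbz h'
      · exact hzb h'
  have key : ∀ v, (Finset.univ.filter (fun w => switchRel G a b x z v w)).card
      = (Finset.univ.filter (fun w => G.Adj v w)).card := by
    intro v
    by_cases hva : v = a
    · subst hva
      rw [Finset.filter_congr (q := fun w => (G.Adj v w ∨ w = x) ∧ w ≠ b) ?_,
        card_filter_or_ne_aux _ _ _ hnax (hadj : G.Adj v b) hxb]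
      intro w _
      unfold switchRel
      constructor
      · rintro ⟨h1, h2, h3⟩
        refine ⟨?_, fun hwb => h2 (Or.inl ⟨rfl, hwb⟩)⟩
        rcases h1 with h1 | (⟨-, h1⟩ | ⟨h1, -⟩) | (⟨h1, -⟩ | ⟨h1, -⟩)
        · exact Or.inl h1
        · exact Or.inr h1
        · exact absurd h1 hax
        · exact absurd h1 hab
        · exact absurd h1 haz
      · rintro ⟨h1, h2⟩
        refine ⟨?_, ?_, ?_⟩
        · rcases h1 with h1 | rfl
          · exact Or.inl h1
          · exact Or.inr (Or.inl (Or.inl ⟨rfl, rfl⟩))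
        · rintro (⟨-, h⟩ | ⟨h, -⟩)
          · exact h2 h
          · exact hab h
        · rintro (⟨h, -⟩ | ⟨h, -⟩)
          · exact hax h
          · exact haz h
    by_cases hvb : v = b
    · subst hvb
      rw [Finset.filter_congr (q := fun w => (G.Adj v w ∨ w = z) ∧ w ≠ a) ?_,
        card_filter_or_ne_aux _ _ _ hnbz (hadj.symm : G.Adj v a) hza]
      intro w _
      unfold switchRel
      constructor
      · rintro ⟨h1, h2, h3⟩
        refine ⟨?_, fun hwa => h2 (Or.inr ⟨rfl, hwa⟩)⟩
        rcases h1 with h1 | (⟨h1, -⟩ | ⟨h1, -⟩) | (⟨-, h1⟩ | ⟨h1, -⟩)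
        · exact Or.inl h1
        · exact absurd h1 (Ne.symm hab)
        · exact absurd h1 hbx'
        · exact Or.inr h1
        · exact absurd h1 hbz
      · rintro ⟨h1, h2⟩
        refine ⟨?_, ?_, ?_⟩
        · rcases h1 with h1 | rfl
          · exact Or.inl h1
          · exact Or.inr (Or.inr (Or.inl ⟨rfl, rfl⟩))
        · rintro (⟨h, -⟩ | ⟨-, h⟩)
          · exact Ne.symm hab h
          · exact h2 h
        · rintro (⟨h, -⟩ | ⟨h, -⟩)
          · exact hbx' h
          · exact hbz h
    by_cases hvx : v = x
    · subst hvx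
      rw [Finset.filter_congr (q := fun w => (G.Adj v w ∨ w = a) ∧ w ≠ z) ?_,
        card_filter_or_ne_aux _ _ _ hnxa (hxz : G.Adj v z) haz]
      intro w _
      unfold switchRel
      constructor
      · rintro ⟨h1, h2, h3⟩
        refine ⟨?_, fun hwz => h3 (Or.inl ⟨rfl, hwz⟩)⟩
        rcases h1 with h1 | (⟨h1, -⟩ | ⟨-, h1⟩) | (⟨h1, -⟩ | ⟨h1, -⟩)
        · exact Or.inl h1
        · exact absurd h1 hxa
        · exact Or.inr h1
        · exact absurd h1 hxb
        · exact absurd h1 hxz'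
      · rintro ⟨h1, h2⟩
        refine ⟨?_, ?_, ?_⟩
        · rcases h1 with h1 | rfl
          · exact Or.inl h1
          · exact Or.inr (Or.inl (Or.inr ⟨rfl, rfl⟩))
        · rintro (⟨h, -⟩ | ⟨h, -⟩)
          · exact hxa h
          · exact hxb h
        · rintro (⟨-, h⟩ | ⟨h, -⟩)
          · exact h2 h
          · exact hxz' h
    by_cases hvz : v = z
    · subst hvz
      rw [Finset.filter_congr (q := fun w => (G.Adj v w ∨ w = b) ∧ w ≠ x) ?_,
        card_filter_or_ne_aux _ _ _ hnzb (hxz.symm : G.Adj v x) hbx']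
      intro w _
      unfold switchRel
      constructor
      · rintro ⟨h1, h2, h3⟩
        refine ⟨?_, fun hwx => h3 (Or.inr ⟨rfl, hwx⟩)⟩
        rcases h1 with h1 | (⟨h1, -⟩ | ⟨h1, -⟩) | (⟨h1, -⟩ | ⟨-, h1⟩)
        · exact Or.inl h1
        · exact absurd h1 hza
        · exact absurd h1 hzx
        · exact absurd h1 hzb
        · exact Or.inr h1
      · rintro ⟨h1, h2⟩
        refine ⟨?_, ?_, ?_⟩
        · rcases h1 with h1 | rfl
          · exact Or.inl h1
          · exact Or.inr (Or.inr (Or.inr ⟨rfl, rfl⟩))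
        · rintro (⟨h, -⟩ | ⟨h, -⟩)
          · exact hza h
          · exact hzb h
        · rintro (⟨h, -⟩ | ⟨-, h⟩)
          · exact hzx h
          · exact h2 h
    · refine congrArg Finset.card (Finset.filter_congr ?_)
      intro w _
      unfold switchRel
      constructor
      · rintro ⟨h1, h2, h3⟩
        rcases h1 with h1 | (⟨h1, -⟩ | ⟨h1, -⟩) | (⟨h1, -⟩ | ⟨h1, -⟩)
        · exact h1
        · exact absurd h1 hva
        · exact absurd h1 hvx
        · exact absurd h1 hvb
        · exact absurd h1 hvz
      · intro h1
        refine ⟨Or.inl h1, ?_, ?_⟩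
        · rintro (⟨h, -⟩ | ⟨h, -⟩)
          · exact hva h
          · exact hvb h
        · rintro (⟨h, -⟩ | ⟨h, -⟩)
          · exact hvx h
          · exact hvz h
  refine ⟨⟨switchRel G a b x z, ⟨fun _ _ h => hs h⟩, ⟨hi⟩⟩, inferInstanceAs (DecidableRel (switchRel G a b x z)), ?_, ?_⟩
  · intro v
    rw [SimpleGraph.degree, SimpleGraph.neighborFinset_eq_filter,
      SimpleGraph.degree, SimpleGraph.neighborFinset_eq_filter]
    exact key v
  · intro h
    exact h.2.1 (Or.inl ⟨rfl, rfl⟩)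

end surgery

lemma keyA (c k t T e : ℤ) (hc : 1 ≤ c) (hck : c ≤ k) (hkt : k ≤ t) (hct : c + 1 ≤ t)
    (hT : 0 ≤ T) (he : 1 ≤ e) :
    k * c ≤ k * (k-1) + (t-k) * c + (c-1) + T + (e-1) := by
  have hx : (0:ℤ) ≤ k - c := by linarith
  have h1 : (k - c) * ((k - c) - 1) ≥ 0 := by
    rcases eq_or_lt_of_le hx with h | h
    · rw [← h]; simp
    · have : (1:ℤ) ≤ k - c := by linarith
      have : (0:ℤ) ≤ (k - c) - 1 := by linarith
      exact mul_nonneg hx this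
  have h2 : c * (t - c) ≥ c * 1 := by
    apply mul_le_mul_of_nonneg_left (by linarith) (by linarith)
  nlinarith [h1, h2]

lemma keyB (c k t T U e : ℤ) (hc : t + 1 ≤ c) (hk1 : 1 ≤ k) (hkt : k ≤ t) (he : 1 ≤ e)
    (hU' : (t+1)*c ≤ (t+1)*t + (U + e)) (hTU : k*U ≤ (t+1)*T) :
    (t+1) * (k * (c - t)) + 1 ≤ (t+1) * (T + e) := by
  have h3 : k*((t+1)*c) ≤ k*((t+1)*t + (U + e)) :=
    mul_le_mul_of_nonneg_left hU' (by linarith)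
  have h4 : (1:ℤ) * 1 ≤ (t+1-k)*e := by
    apply mul_le_mul (by linarith) (by linarith) (by linarith) (by linarith)
  nlinarith [h3, hTU, h4]


def EGcond (n : ℕ) (D : ℕ → ℕ) : Prop :=
  ∀ k ≤ n, ∑ i ∈ Finset.range k, D i ≤ k * (k-1) + ∑ i ∈ Finset.Ico k n, min k (D i)

lemma realize : ∀ s : ℕ, ∀ n (D : ℕ → ℕ), (∀ i j : ℕ, i ≤ j → D j ≤ D i) →
    (∀ i, n ≤ i → D i = 0) → (∑ i ∈ Finset.range n, D i) = s → Even s → EGcond n D →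
    ∃ G : SimpleGraph (Fin n), ∃ _ : DecidableRel G.Adj, ∀ v : Fin n, G.degree v = D v.val := by
  intro s
  induction s using Nat.strong_induction_on with
  | _ s IH =>
  intro n D hmono hsupp hsum heven hEG
  by_cases hs0 : s = 0
  · subst hs0
    refine ⟨⊥, (fun a b => inferInstanceAs (Decidable False)), fun v => ?_⟩
    rw [SimpleGraph.bot_degree]
    have := (Finset.sum_eq_zero_iff.1 hsum) v.val (by simp [v.isLt])
    omega
  -- positive sum
  have hspos : 0 < s := Nat.pos_of_ne_zero hs0
  have hfind0 : ∃ i, D i = 0 := ⟨n, hsupp n le_rfl⟩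
  classical
  set m := Nat.find hfind0 with hm
  have hm0 : D m = 0 := Nat.find_spec hfind0
  have hmle : m ≤ n := Nat.find_le (hsupp n le_rfl)
  have hposm : ∀ i, i < m → 0 < D i := by
    intro i hi
    have := Nat.find_min hfind0 hi
    omega
  have hD0 : 0 < D 0 := by
    rcases Nat.eq_zero_or_pos (D 0) with h | h
    · exfalso; apply hs0
      rw [← hsum]
      exact Finset.sum_eq_zero (fun i _ => le_antisymm (h ▸ hmono 0 i (Nat.zero_le _)) (Nat.zero_le _))
    · exact h
  have hm1 : 1 ≤ m := by
    rcases Nat.eq_zero_or_pos m with h | h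
    · rw [h] at hm0; omega
    · exact h
  have hn1 : 1 ≤ n := le_trans hm1 hmle
  -- EG at 1 gives D 0 ≤ m - 1
  have hsum_min1 : ∑ i ∈ Finset.Ico 1 n, min 1 (D i) = m - 1 := by
    rw [← Finset.sum_Ico_consecutive _ hm1 hmle]
    have h1 : ∑ i ∈ Finset.Ico 1 m, min 1 (D i) = ∑ _i ∈ Finset.Ico 1 m, 1 :=
      Finset.sum_congr rfl (fun i hi => by
        have := hposm i (Finset.mem_Ico.1 hi).2; omega)
    have h2 : ∑ i ∈ Finset.Ico m n, min 1 (D i) = 0 :=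
      Finset.sum_eq_zero (fun i hi => by
        have : D i ≤ D m := hmono m i (Finset.mem_Ico.1 hi).1
        omega)
    rw [h1, h2, Finset.sum_const, Nat.card_Ico]
    simp
  have hcm : D 0 ≤ m - 1 := by
    have := hEG 1 hn1
    simpa [hsum_min1] using this
  have hm2 : 2 ≤ m := by omega
  -- the drop index t
  have hfindt : ∃ i, (i = m - 2 ∨ D (i+1) < D i) := ⟨m - 2, Or.inl rfl⟩
  set t := Nat.find hfindt with htdef
  have ht : t = m - 2 ∨ D (t+1) < D t := Nat.find_spec hfindt
  have htle : t ≤ m - 2 := Nat.find_le (Or.inl rfl)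
  have hconst : ∀ i, i ≤ t → D i = D 0 := by
    intro i
    induction i with
    | zero => intro _; rfl
    | succ j ihj =>
      intro hj
      have hjlt : j < t := by omega
      have hnq := Nat.find_min hfindt hjlt
      push_neg at hnq
      have h1 : D (j+1) = D j := le_antisymm (hmono j (j+1) (by omega)) hnq.2
      rw [h1, ihj (by omega)]
  have htm : t ≠ m - 1 := by omega
  have he1 : 1 ≤ D (m-1) := hposm (m-1) (by omega)
  have hec : D (m-1) ≤ D 0 := hmono 0 (m-1) (Nat.zero_le _)
  have hDt : D t = D 0 := hconst t le_rfl
  -- the reduced sequence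
  set D' : ℕ → ℕ := fun i => if i = t ∨ i = m - 1 then D i - 1 else D i with hD'def
  have hD'pt : ∀ i, D i = D' i + (if i = t then 1 else 0) + (if i = m-1 then 1 else 0) := by
    intro i
    by_cases h1 : i = t
    · subst h1; simp [hD'def, htm, hDt]; omega
    · by_cases h2 : i = m - 1
      · subst h2; simp [hD'def, h1]; omega
      · simp [hD'def, h1, h2]
  have hlt : ∀ j, t < j → j ≠ m - 1 → D j < D 0 := by
    intro j hj1 hj2
    rcases ht with h | h
    · have hjm : m ≤ j := by omega
      have : D j ≤ D m := hmono m j hjm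
      omega
    · have : D j ≤ D (t+1) := hmono (t+1) j (by omega)
      omega
  have hD't : D' t = D 0 - 1 := by simp [hD'def, hDt]
  have hD'm : D' (m-1) = D (m-1) - 1 := by simp [hD'def, htm]
  have hD'o : ∀ i, i ≠ t → i ≠ m - 1 → D' i = D i := by
    intro i h1 h2; simp [hD'def, h1, h2]
  have hmono' : ∀ i j : ℕ, i ≤ j → D' j ≤ D' i := by
    intro i j hij
    rcases eq_or_lt_of_le hij with rfl | hij'
    · exact le_refl _
    by_cases hit : i = t
    · subst hit
      rw [hD't]
      by_cases hjm : j = m - 1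
      · subst hjm; rw [hD'm]; omega
      · have hj : j ≠ t := by omega
        rw [hD'o j hj hjm]
        have := hlt j hij' hjm
        omega
    by_cases him : i = m - 1
    · subst him
      rw [hD'm]
      have hjt : j ≠ t := by omega
      have hjm : j ≠ m - 1 := by omega
      rw [hD'o j hjt hjm]
      have : D j ≤ D m := hmono m j (by omega)
      omega
    · rw [hD'o i hit him]
      calc D' j ≤ D j := by
            by_cases h1 : j = t
            · subst h1; rw [hD't, hDt]; omega
            · by_cases h2 : j = m - 1
              · subst h2; rw [hD'm]; omega
              · rw [hD'o j h1 h2]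
        _ ≤ D i := hmono i j hij
  have hsupp' : ∀ i, n ≤ i → D' i = 0 := by
    intro i hi
    have h1 : i ≠ t := by omega
    have h2 : i ≠ m - 1 := by omega
    rw [hD'o i h1 h2]; exact hsupp i hi
  have hsum' : ∑ i ∈ Finset.range n, D' i = s - 2 := by
    have h1 : ∑ i ∈ Finset.range n, D i
        = ∑ i ∈ Finset.range n, D' i
          + ∑ i ∈ Finset.range n, (if i = t then 1 else 0)
          + ∑ i ∈ Finset.range n, (if i = m-1 then 1 else 0) := by
      rw [← Finset.sum_add_distrib, ← Finset.sum_add_distrib]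
      exact Finset.sum_congr rfl (fun i _ => hD'pt i)
    rw [Finset.sum_ite_eq' (Finset.range n) t (fun _ => 1),
      Finset.sum_ite_eq' (Finset.range n) (m-1) (fun _ => 1)] at h1
    rw [if_pos (by simp; omega), if_pos (by simp; omega)] at h1
    omega
  have hs2 : 2 ≤ s := by
    obtain ⟨a, ha⟩ := heven; omega
  have heven' : Even (s - 2) := by
    obtain ⟨a, ha⟩ := heven
    exact ⟨a - 1, by omega⟩
  have hEG' : EGcond n D' := by
    intro k hk
    by_cases hkt : k ≤ t
    · -- k ≤ t : prefix of D' below k is constant D 0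
      have hL' : ∑ i ∈ Finset.range k, D' i = k * D 0 := by
        rw [Finset.sum_congr rfl (fun i hi => ?_), Finset.sum_const, Finset.card_range, smul_eq_mul]
        have hik : i < k := Finset.mem_range.1 hi
        rw [hD'o i (by omega) (by omega)]
        exact hconst i (by omega)
      -- splitting the right-hand sum
      have hsplitA : ∑ i ∈ Finset.Ico k n, min k (D' i)
          = ∑ i ∈ Finset.Ico k t, min k (D' i) + min k (D' t)
            + ∑ i ∈ Finset.Ico (t+1) (m-1), min k (D' i)
            + ∑ i ∈ Finset.Ico (m-1) n, min k (D' i) := by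
        rw [← Finset.sum_Ico_consecutive (fun i => min k (D' i)) (show k ≤ t+1 by omega) (show t+1 ≤ n by omega),
          ← Finset.sum_Ico_consecutive (fun i => min k (D' i)) (show t+1 ≤ m-1 by omega) (show m-1 ≤ n by omega),
          Finset.sum_Ico_succ_top (show k ≤ t by omega)]
        ring
      have hT : ∑ i ∈ Finset.Ico (t+1) (m-1), min k (D' i)
          = ∑ i ∈ Finset.Ico (t+1) (m-1), min k (D i) :=
        Finset.sum_congr rfl (fun i hi => by
          have := Finset.mem_Ico.1 hi
          rw [hD'o i (by omega) (by omega)])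
      have hlast : min k (D' (m-1)) ≤ ∑ i ∈ Finset.Ico (m-1) n, min k (D' i) :=
        Finset.single_le_sum (f := fun i => min k (D' i)) (fun i _ => Nat.zero_le _)
          (Finset.mem_Ico.2 ⟨le_rfl, by omega⟩)
      by_cases hck : D 0 ≤ k
      · -- Case A : need slack 2
        have hk1 : 1 ≤ k := by omega
        have hTge : m - t - 2 ≤ ∑ i ∈ Finset.Ico (t+1) (m-1), min k (D i) := by
          calc m - t - 2 = (Finset.Ico (t+1) (m-1)).card := by rw [Nat.card_Ico]; omega
            _ = ∑ _i ∈ Finset.Ico (t+1) (m-1), 1 := by rw [Finset.sum_const, smul_eq_mul, mul_one]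
            _ ≤ _ := Finset.sum_le_sum (fun i hi => by
                have hi' := Finset.mem_Ico.1 hi
                have := hposm i (by omega)
                omega)
        have hfirst : ∑ i ∈ Finset.Ico k t, min k (D' i) = (t - k) * D 0 := by
          rw [Finset.sum_congr rfl (fun i hi => ?_), Finset.sum_const, Nat.card_Ico, smul_eq_mul]
          have hi' := Finset.mem_Ico.1 hi
          rw [hD'o i (by omega) (by omega), hconst i (by omega)]
          omega
        have hvt : min k (D' t) = D 0 - 1 := by rw [hD't]; omega
        have hvm : min k (D' (m-1)) = D (m-1) - 1 := by rw [hD'm]; omega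
        rw [hL', hsplitA, hfirst, hvt, hT]
        rcases eq_or_lt_of_le (show D 0 ≤ t by omega) with hct | hct
        · -- t = D 0, k = D 0
          have hkc : k = D 0 := by omega
          by_cases hm3 : m - 1 = t + 1
          · -- very tight case: parity argument
            have hTval : ∑ i ∈ Finset.Ico (t+1) (m-1), min k (D i) = 0 := by
              rw [hm3]; simp
            have he2 : 2 ≤ D (m-1) := by
              by_contra hcon
              have hem : D (m-1) = 1 := by omega
              obtain ⟨μ, hμ⟩ : ∃ μ, m = μ + 1 := ⟨m-1, by omega⟩
              have hzero : ∑ i ∈ Finset.Ico m n, D i = 0 :=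
                Finset.sum_eq_zero (fun i hi => by
                  have : D i ≤ D m := hmono m i (Finset.mem_Ico.1 hi).1
                  omega)
              have hsval : s = μ * D 0 + 1 := by
                rw [← hsum, Finset.range_eq_Ico,
                  ← Finset.sum_Ico_consecutive D (Nat.zero_le m) hmle, hzero,
                  ← Finset.range_eq_Ico, hμ, Finset.sum_range_succ]
                have hconst2 : ∑ i ∈ Finset.range μ, D i = μ * D 0 := by
                  rw [Finset.sum_congr rfl (fun i hi => hconst i (by
                      have := Finset.mem_range.1 hi; omega)),
                    Finset.sum_const, Finset.card_range, smul_eq_mul]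
                rw [hconst2]
                have hμm : μ = m - 1 := by omega
                rw [hμm, hem]
              have hμval : μ = D 0 + 1 := by omega
              have hpar := Nat.even_mul_succ_self (D 0)
              obtain ⟨u, hu⟩ := heven
              obtain ⟨w, hw⟩ := hpar
              rw [hμval] at hsval
              have hcm2 : (D 0 + 1) * D 0 = D 0 * (D 0 + 1) := mul_comm _ _
              omega
            have htail := hlast
            rw [hvm] at htail
            have h5 : k * (k - 1) + (k - 1) + 1 = k * k := by
              obtain ⟨c', hc'⟩ := Nat.exists_eq_add_of_le (show 1 ≤ k by omega)
              rw [hc']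
              simp [Nat.add_sub_cancel_left]
              ring
            rw [← hkc, hTval, show t - k = 0 from by omega, Nat.zero_mul]
            have h6 : 1 ≤ D (m-1) - 1 := by omega
            linarith [htail, h6, h5]
          · -- m ≥ t+3 : T ≥ 1
            have hTge1 : 1 ≤ ∑ i ∈ Finset.Ico (t+1) (m-1), min k (D i) := by
              have : 1 ≤ m - t - 2 := by omega
              omega
            have htail := hlast
            rw [hvm] at htail
            have h5 : k * (k - 1) + (k - 1) + 1 = k * k := by
              obtain ⟨c', hc'⟩ := Nat.exists_eq_add_of_le (show 1 ≤ k by omega)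
              rw [hc']
              simp [Nat.add_sub_cancel_left]
              ring
            rw [← hkc, show t - k = 0 from by omega, Nat.zero_mul]
            linarith [htail, he1, h5, hTge1]
        · -- t > D 0 : arithmetic slack
          have htail := hlast
          rw [hvm] at htail
          have key : k * D 0 ≤ k * (k-1) + (t-k) * D 0 + (D 0 - 1)
              + (∑ i ∈ Finset.Ico (t+1) (m-1), min k (D i)) + (D (m-1) - 1) := by
            zify [show 1 ≤ k by omega, show k ≤ t by omega, show 1 ≤ D 0 by omega,
              show 1 ≤ D (m-1) from he1]
            exact keyA (D 0) k t _ (D (m-1)) (by omega) (by exact_mod_cast hck)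
              (by exact_mod_cast hkt) (by omega) (by positivity) (by exact_mod_cast he1)
          omega
      · -- k < D 0
        by_cases hek : D (m-1) ≤ k
        · -- Case B : need slack 1
          have hk1 : 1 ≤ k := by
            have := he1; omega
          have hfirst : ∑ i ∈ Finset.Ico k t, min k (D' i) = (t - k) * k := by
            rw [Finset.sum_congr rfl (fun i hi => ?_), Finset.sum_const, Nat.card_Ico, smul_eq_mul]
            have hi' := Finset.mem_Ico.1 hi
            rw [hD'o i (by omega) (by omega), hconst i (by omega)]
            omega
          have hvt : min k (D' t) = k := by rw [hD't]; omega
          have hvm : min k (D' (m-1)) = D (m-1) - 1 := by rw [hD'm]; omega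
          rw [hL', hsplitA, hfirst, hvt, hT]
          have hlast' := hlast
          rw [hvm] at hlast'
          set T := ∑ i ∈ Finset.Ico (t+1) (m-1), min k (D i) with hTdef
          rcases le_or_gt (D 0) t with htc | htc
          · -- t ≥ D 0 : easy
            have h1 : k * D 0 ≤ k * t := Nat.mul_le_mul_left k htc
            have h2 : k * (k-1) + (t-k)*k + k = k * t := by
              have : (k-1) + (t-k) + 1 = t := by omega
              calc k * (k-1) + (t-k)*k + k = k * ((k-1) + (t-k) + 1) := by ring
                _ = k * t := by rw [this]
            omega
          · -- t < D 0 : use EG at t+1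
            have hEGt1 := hEG (t+1) (by omega)
            have hLt1 : ∑ i ∈ Finset.range (t+1), D i = (t+1) * D 0 := by
              rw [Finset.sum_congr rfl (fun i hi => hconst i (by
                  have := Finset.mem_range.1 hi; omega)),
                Finset.sum_const, Finset.card_range, smul_eq_mul]
            have hsplitU : ∑ i ∈ Finset.Ico (t+1) n, min (t+1) (D i)
                = ∑ i ∈ Finset.Ico (t+1) (m-1), min (t+1) (D i)
                  + ∑ i ∈ Finset.Ico (m-1) n, min (t+1) (D i) := by
              rw [Finset.sum_Ico_consecutive (fun i => min (t+1) (D i))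
                (show t+1 ≤ m-1 by omega) (show m-1 ≤ n by omega)]
            have htail : ∑ i ∈ Finset.Ico (m-1) n, min (t+1) (D i) = D (m-1) := by
              rw [Finset.sum_eq_sum_Ico_succ_bot (show m-1 < n by omega)]
              have hmm : m - 1 + 1 = m := by omega
              rw [hmm]
              have hz : ∑ i ∈ Finset.Ico m n, min (t+1) (D i) = 0 :=
                Finset.sum_eq_zero (fun i hi => by
                  have : D i ≤ D m := hmono m i (Finset.mem_Ico.1 hi).1
                  omega)
              rw [hz]
              have : min (t+1) (D (m-1)) = D (m-1) := by omega
              omega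
            set U := ∑ i ∈ Finset.Ico (t+1) (m-1), min (t+1) (D i) with hUdef
            have hU' : (t+1) * D 0 ≤ (t+1) * t + (U + D (m-1)) := by
              rw [hsplitU, htail] at hEGt1
              rw [hLt1] at hEGt1
              have h9 : (t+1) * ((t+1) - 1) = (t+1) * t := by
                rw [Nat.add_sub_cancel]
              omega
            have hTU : k * U ≤ (t+1) * T := by
              rw [hTdef, hUdef, Finset.mul_sum, Finset.mul_sum]
              refine Finset.sum_le_sum (fun i _ => ?_)
              rcases le_total (D i) k with h | h
              · rw [min_eq_right h, min_eq_right (by omega)]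
                exact Nat.mul_le_mul_right _ (by omega)
              · rw [min_eq_left h]
                rcases le_total (D i) (t+1) with h2 | h2
                · rw [min_eq_right h2]
                  calc k * D i ≤ k * (t+1) := Nat.mul_le_mul_left _ h2
                    _ = (t+1) * k := mul_comm _ _
                · rw [min_eq_left h2, mul_comm]
            -- conclude T + e ≥ k*(D 0 - t) + 1
            have hbig : (t+1) * (T + D (m-1)) ≥ (t+1) * (k * (D 0 - t)) + 1 := by
              zify [show t ≤ D 0 by omega]
              refine keyB (D 0 : ℤ) k t T U (D (m-1)) ?_ ?_ ?_ ?_ ?_ ?_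
              · push_cast; omega
              · push_cast; omega
              · push_cast; omega
              · push_cast; omega
              · exact_mod_cast hU'
              · exact_mod_cast hTU
            have hfin : T + D (m-1) ≥ k * (D 0 - t) + 1 := by
              by_contra hcon
              push_neg at hcon
              have : (t+1) * (T + D (m-1)) ≤ (t+1) * (k * (D 0 - t)) :=
                Nat.mul_le_mul_left _ (by omega)
              omega
            have hgoal2 : k * t + k * (D 0 - t) = k * D 0 := by
              rw [← Nat.mul_add]
              congr 1
              omega
            have h2 : k * (k-1) + (t-k)*k + k = k * t := by
              have h3 : (k-1) + (t-k) + 1 = t := by omega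
              calc k * (k-1) + (t-k)*k + k = k * ((k-1) + (t-k) + 1) := by ring
                _ = k * t := by rw [h3]
            omega
        · -- Case C : no loss, D' min-values equal those of D
          have hL2 : ∑ i ∈ Finset.range k, D' i = ∑ i ∈ Finset.range k, D i :=
            Finset.sum_congr rfl (fun i hi => by
              have := Finset.mem_range.1 hi
              rw [hD'o i (by omega) (by omega)])
          have hR2 : ∑ i ∈ Finset.Ico k n, min k (D' i) = ∑ i ∈ Finset.Ico k n, min k (D i) :=
            Finset.sum_congr rfl (fun i hi => by
              have hi' := Finset.mem_Ico.1 hi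
              by_cases h1 : i = t
              · subst h1; rw [hD't, hDt]; omega
              · by_cases h2 : i = m-1
                · subst h2; rw [hD'm]; omega
                · rw [hD'o i h1 h2])
          rw [hL2, hR2]
          exact hEG k hk
    · -- k > t : losses on the left cover losses on the right
      push_neg at hkt
      have hLk : ∑ i ∈ Finset.range k, D i
          = ∑ i ∈ Finset.range k, D' i + 1 + (if m-1 < k then 1 else 0) := by
        have h1 : ∑ i ∈ Finset.range k, D i
            = ∑ i ∈ Finset.range k, D' i
              + ∑ i ∈ Finset.range k, (if i = t then 1 else 0)
              + ∑ i ∈ Finset.range k, (if i = m-1 then 1 else 0) := by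
          rw [← Finset.sum_add_distrib, ← Finset.sum_add_distrib]
          exact Finset.sum_congr rfl (fun i _ => hD'pt i)
        rw [Finset.sum_ite_eq' (Finset.range k) t (fun _ => 1),
          Finset.sum_ite_eq' (Finset.range k) (m-1) (fun _ => 1)] at h1
        rw [if_pos (by simp; omega)] at h1
        by_cases h2 : m - 1 < k
        · rw [if_pos (by simp; omega)] at h1
          rw [if_pos h2]
          omega
        · rw [if_neg (by simp; omega)] at h1
          rw [if_neg h2]
          omega
      have hRk : ∑ i ∈ Finset.Ico k n, min k (D i)
          ≤ ∑ i ∈ Finset.Ico k n, min k (D' i) + 1 := by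
        calc ∑ i ∈ Finset.Ico k n, min k (D i)
            ≤ ∑ i ∈ Finset.Ico k n, (min k (D' i) + (if i = m-1 then 1 else 0)) := by
              refine Finset.sum_le_sum (fun i hi => ?_)
              have hi' := Finset.mem_Ico.1 hi
              by_cases h2 : i = m-1
              · subst h2
                rw [hD'm]
                simp only [if_pos rfl]
                simp only [Nat.min_def]
                split_ifs <;> omega
              · rw [hD'o i (by omega) h2, if_neg h2]
                simp
          _ ≤ ∑ i ∈ Finset.Ico k n, min k (D' i) + 1 := by
              rw [Finset.sum_add_distrib,
                Finset.sum_ite_eq' (Finset.Ico k n) (m-1) (fun _ => 1)]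
              by_cases h2 : m-1 ∈ Finset.Ico k n
              · rw [if_pos h2]
              · rw [if_neg h2]; omega
      have := hEG k hk
      omega
  obtain ⟨G', instG', hdegG'⟩ := IH (s-2) (by omega) n D' hmono' hsupp' hsum' heven' hEG'
  -- the two vertices to connect
  have htn : t < n := by omega
  have hmn : m - 1 < n := by omega
  set a : Fin n := ⟨t, htn⟩ with ha
  set b : Fin n := ⟨m-1, hmn⟩ with hb
  have hab : a ≠ b := by
    intro h
    exact htm (congrArg Fin.val h)
  have hdega : G'.degree a = D 0 - 1 := by rw [hdegG' a]; exact hD't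
  have hdegb : G'.degree b = D (m-1) - 1 := by rw [hdegG' b]; exact hD'm
  -- make a, b nonadjacent (preserving degrees)
  obtain ⟨H, instH, hdegH, hnadjH⟩ :
      ∃ H : SimpleGraph (Fin n), ∃ _ : DecidableRel H.Adj,
        (∀ v, H.degree v = G'.degree v) ∧ ¬ H.Adj a b := by
    by_cases hGadj : G'.Adj a b
    · -- find x
      obtain ⟨x, hxm, hnax, hxa⟩ : ∃ x : Fin n, x.val < m ∧ ¬ G'.Adj a x ∧ x ≠ a := by
        by_contra hcon
        push_neg at hcon
        have hsub : Finset.univ.filter (fun i : Fin n => i.val < m)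
            ⊆ insert a (G'.neighborFinset a) := by
          intro w hw
          simp only [Finset.mem_filter, Finset.mem_univ, true_and] at hw
          rcases Classical.em (G'.Adj a w) with h | h
          · simp [h]
          · simp [hcon w hw h]
        have hcard := Finset.card_le_card hsub
        rw [card_filter_val_lt m hmle] at hcard
        have : (insert a (G'.neighborFinset a)).card ≤ G'.degree a + 1 :=
          le_trans (Finset.card_insert_le _ _) (by rw [SimpleGraph.degree])
        omega
      have hxb : x ≠ b := by
        rintro rfl
        exact hnax hGadj
      have hdegx : G'.degree x = D x.val := by
        rw [hdegG' x, hD'o x.val (fun h => hxa (Fin.ext h)) (fun h => hxb (Fin.ext h))]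
      have hdegbx : G'.degree b ≤ G'.degree x := by
        rw [hdegb, hdegx]
        have : D (m-1) ≤ D x.val := hmono x.val (m-1) (by omega)
        omega
      exact make_nonadjacent G' a b x hGadj hnax hxa hxb hdegbx
    · exact ⟨G', instG', fun v => rfl, hGadj⟩
  obtain ⟨K, instK, hKa, hKb, hKo⟩ := add_one_edge H a b hab hnadjH
  refine ⟨K, instK, fun v => ?_⟩
  by_cases hva : v = a
  · subst hva
    rw [hKa, hdegH, hdega]
    show _ = D t
    omega
  by_cases hvb : v = b
  · subst hvb
    rw [hKb, hdegH, hdegb]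
    show _ = D (m-1)
    omega
  · rw [hKo v hva hvb, hdegH, hdegG' v,
      hD'o v.val (fun h => hva (Fin.ext h)) (fun h => hvb (Fin.ext h))]

/-- A finite integer sequence (given as `d : Fin n → ℕ`) is graphic if it is realized as
the degree sequence of a simple graph on `n` vertices. -/
def IsGraphicSeq {n : ℕ} (d : Fin n → ℕ) : Prop :=
  ∃ (G : SimpleGraph (Fin n)) (_ : DecidableRel G.Adj), ∀ i, G.degree i = d i

/-- Erdős–Gallai: a nonincreasing sequence of positive integers is graphic iff its sum is
even and the Erdős–Gallai inequalities hold for every `1 ≤ k ≤ n`. -/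
theorem erdos_gallai {n : ℕ} (d : Fin n → ℕ)
    (hmono : ∀ i j : Fin n, i ≤ j → d j ≤ d i) (hpos : ∀ i, 0 < d i) :
    IsGraphicSeq d ↔
      (Even (∑ i, d i) ∧
        ∀ k : ℕ, 1 ≤ k → k ≤ n →
          ∑ i ∈ Finset.univ.filter (fun i : Fin n => i.val < k), d i ≤
            k * (k - 1) +
              ∑ i ∈ Finset.univ.filter (fun i : Fin n => k ≤ i.val), min k (d i)) := by
  constructor
  · rintro ⟨G, inst, hdeg⟩
    clear hpos hmono
    revert hdeg
    letI := inst
    intro hdeg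
    constructor
    · have h1 := G.sum_degrees_eq_twice_card_edges
      have h2 : ∑ i, d i = ∑ i, G.degree i :=
        Finset.sum_congr rfl (fun i _ => (hdeg i).symm)
      rw [h2, h1]
      exact even_two_mul _
    · intro k hk1 hkn
      have hnec := eg_necessity G k hkn
      have e1 : ∑ i ∈ Finset.univ.filter (fun i : Fin n => i.val < k), G.degree i
          = ∑ i ∈ Finset.univ.filter (fun i : Fin n => i.val < k), d i :=
        Finset.sum_congr rfl (fun i _ => hdeg i)
      have e2 : ∑ i ∈ Finset.univ.filter (fun i : Fin n => k ≤ i.val), min k (G.degree i)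
          = ∑ i ∈ Finset.univ.filter (fun i : Fin n => k ≤ i.val), min k (d i) :=
        Finset.sum_congr rfl (fun i _ => by rw [hdeg i])
      rw [e1, e2] at hnec
      exact hnec
  · rintro ⟨heven, hineq⟩
    classical
    set D : ℕ → ℕ := fun j => if h : j < n then d ⟨j, h⟩ else 0 with hD
    have hdD : ∀ i : Fin n, d i = D i.val := by
      intro i
      simp [hD, i.isLt]
    have hmonoD : ∀ i j : ℕ, i ≤ j → D j ≤ D i := by
      intro i j hij
      by_cases hj : j < n
      · have hi : i < n := lt_of_le_of_lt hij hj
        simp only [hD, dif_pos hj, dif_pos hi]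
        exact hmono ⟨i, hi⟩ ⟨j, hj⟩ hij
      · simp [hD, hj]
    have hsuppD : ∀ i, n ≤ i → D i = 0 := by
      intro i hi
      simp [hD, Nat.not_lt.2 hi]
    have hsumD : ∑ i ∈ Finset.range n, D i = ∑ i, d i := by
      rw [← Fin.sum_univ_eq_sum_range D n]
      exact Finset.sum_congr rfl (fun i _ => (hdD i).symm)
    have hEGD : EGcond n D := by
      intro k hkn
      rcases Nat.eq_zero_or_pos k with rfl | hk1
      · simp
      · have := hineq k hk1 hkn
        rw [sum_filter_lt_eq k hkn d D hdD,
          sum_filter_ge_eq k (fun i => min k (d i)) (fun j => min k (D j))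
            (fun i => by rw [hdD i])] at this
        exact this
    obtain ⟨G, inst, hdegG⟩ := realize (∑ i, d i) n D hmonoD hsuppD hsumD heven hEGD
    exact ⟨G, inst, fun i => by rw [hdegG i, ← hdD i]⟩
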